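/- Let f : ℝⁿ → ℝ be convex and differentiable, L₁-smooth with respect to the ℓ1 norm (f(x + γz) ≤ f(x) + γ⟨∇f(x), z⟩ + (L₁/2)γ² for all x, all z with ‖z‖₁ = 1, and all γ > 0) and μ₁-strongly convex with respect to the ℓ1 norm (f(y) ≥ f(x) + ⟨∇f(x), y − x⟩ + (μ₁/2)‖y − x‖₁² for all x, y), with 0 < μ₁ ≤ L₁. Let x⋆ be the minimizer of f. Define steepest coordinate descent from x₀: i_t ∈ argmax_i |∂_i f(x_t)| and x_{t+1} = x_t − (1/L₁)·∂_{i_t} f(x_t)·e_{i_t}. Then, writing ε_t := f(x_t) − f(x⋆), for every t ≥ 0: ε_{t+1} ≤ (1 − μ₁/L₁)·ε_t. -/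

import Mathlib

open Set RealInnerProductSpace

/-- linear rate of steepest coordinate descent for a convex function
`f : ℝⁿ → ℝ` that is `L₁`-smooth and `μ₁`-strongly convex w.r.t. the ℓ1 norm. -/
theorem stmt_8 (n : ℕ) (f : EuclideanSpace ℝ (Fin n) → ℝ)
    (f' : EuclideanSpace ℝ (Fin n) → EuclideanSpace ℝ (Fin n))
    (hgrad : ∀ x, HasGradientAt f (f' x) x)
    (hconv : ConvexOn ℝ univ f)
    (L1 μ1 : ℝ) (hμ1 : 0 < μ1) (hμL : μ1 ≤ L1)
    (hsmooth : ∀ x z : EuclideanSpace ℝ (Fin n), (∑ i, |z i|) = 1 →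
      ∀ γ : ℝ, 0 < γ → f (x + γ • z) ≤ f x + γ * ⟪f' x, z⟫ + L1 / 2 * γ ^ 2)
    (hstrong : ∀ x y : EuclideanSpace ℝ (Fin n),
      f x + ⟪f' x, y - x⟫ + μ1 / 2 * (∑ i, |y i - x i|) ^ 2 ≤ f y)
    (xs : EuclideanSpace ℝ (Fin n)) (hmin : ∀ y, f xs ≤ f y)
    (x : ℕ → EuclideanSpace ℝ (Fin n)) (i : ℕ → Fin n)
    (hsteep : ∀ t j, |f' (x t) j| ≤ |f' (x t) (i t)|)
    (hupd : ∀ t, x (t + 1) = x t - (f' (x t) (i t) / L1) • EuclideanSpace.single (i t) 1) :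
    ∀ t : ℕ, f (x (t + 1)) - f xs ≤ (1 - μ1 / L1) * (f (x t) - f xs) := by
  have hL1 : 0 < L1 := lt_of_lt_of_le hμ1 hμL
  intro t
  set g := f' (x t) with hg
  set a := |g (i t)| with ha
  -- strong convexity bound: 2 μ1 (f(x t) - f xs) ≤ a²
  have hε : 2 * μ1 * (f (x t) - f xs) ≤ a ^ 2 := by
    have hsc := hstrong (x t) xs
    set s := ∑ j, |xs j - x t j| with hs
    have hs0 : 0 ≤ s := Finset.sum_nonneg fun j _ => abs_nonneg _
    have hinner : ⟪g, xs - x t⟫ = ∑ j, g j * (xs j - x t j) := by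
      simp [PiLp.inner_apply, RCLike.inner_apply, mul_comm]
    have hbd : |⟪g, xs - x t⟫| ≤ a * s := by
      rw [hinner]
      calc |∑ j, g j * (xs j - x t j)| ≤ ∑ j, |g j * (xs j - x t j)| :=
            Finset.abs_sum_le_sum_abs _ _
        _ ≤ ∑ j, a * |xs j - x t j| := by
            apply Finset.sum_le_sum; intro j _
            rw [abs_mul]
            exact mul_le_mul_of_nonneg_right (hsteep t j) (abs_nonneg _)
        _ = a * s := (Finset.mul_sum _ _ _).symm
    have h1 : f (x t) - f xs ≤ a * s - μ1 / 2 * s ^ 2 := by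
      have := (abs_le.1 hbd).1
      linarith
    nlinarith [sq_nonneg (a - μ1 * s)]
  -- descent: f(x(t+1)) ≤ f(x t) - a²/(2 L1)
  have hdesc : f (x (t + 1)) ≤ f (x t) - a ^ 2 / (2 * L1) := by
    rcases eq_or_lt_of_le (abs_nonneg (g (i t))) with h0 | hpos
    · have hgz : g (i t) = 0 := abs_eq_zero.mp h0.symm
      have hxx : x (t + 1) = x t := by rw [hupd t, ← hg, hgz]; simp
      have ha0 : a = 0 := h0.symm
      rw [hxx, ha0]
      simp
    · rw [← ha] at hpos
      set c : ℝ := if 0 ≤ g (i t) then (-1 : ℝ) else 1 with hc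
      have hac : a * c = -(g (i t)) := by
        rcases le_or_gt 0 (g (i t)) with h | h
        · have hcv : c = -1 := by simp [hc, h]
          rw [hcv, ha, abs_of_nonneg h]; ring
        · have hcv : c = 1 := by simp [hc, not_le.2 h]
          rw [hcv, ha, abs_of_neg h]; ring
      have hz1 : (∑ j, |(EuclideanSpace.single (i t) c : EuclideanSpace ℝ (Fin n)) j|) = 1 := by
        have hcabs : |c| = 1 := by
          rw [hc]; split_ifs <;> simp
        calc (∑ j, |(EuclideanSpace.single (i t) c : EuclideanSpace ℝ (Fin n)) j|)
            = ∑ j, if j = i t then |c| else 0 := by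
              apply Finset.sum_congr rfl; intro j _
              rw [EuclideanSpace.single_apply]
              split_ifs <;> simp
          _ = |c| := by simp
          _ = 1 := hcabs
      have hγ : 0 < a / L1 := div_pos hpos hL1
      have hsm := hsmooth (x t) (EuclideanSpace.single (i t) c) hz1 (a / L1) hγ
      have hx1 : x (t + 1) = x t + (a / L1) • EuclideanSpace.single (i t) c := by
        rw [hupd t, ← hg, sub_eq_add_neg]
        congr 1
        ext j
        simp only [PiLp.smul_apply, EuclideanSpace.single_apply, PiLp.neg_apply, smul_eq_mul]
        split_ifs with h
        · field_simp
          linear_combination -hac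
        · simp
      have hinner : ⟪g, (EuclideanSpace.single (i t) c : EuclideanSpace ℝ (Fin n))⟫ = -a := by
        rw [EuclideanSpace.inner_single_right]
        simp only [RCLike.conj_to_real, starRingEnd_apply, star_trivial]
        rcases le_or_gt 0 (g (i t)) with h | h
        · have hcv : c = -1 := by simp [hc, h]
          rw [hcv, ha, abs_of_nonneg h]; ring
        · have hcv : c = 1 := by simp [hc, not_le.2 h]
          rw [hcv, ha, abs_of_neg h]; ring
      rw [hx1]
      rw [← hg, hinner] at hsm
      have : f (x t) + a / L1 * (-a) + L1 / 2 * (a / L1) ^ 2 = f (x t) - a ^ 2 / (2 * L1) := by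
        field_simp
        ring
      linarith [hsm, this.symm.le]
  -- combine
  have hε0 : 0 ≤ f (x t) - f xs := sub_nonneg.2 (hmin _)
  have key : μ1 / L1 * (f (x t) - f xs) ≤ a ^ 2 / (2 * L1) := by
    rw [div_mul_eq_mul_div, div_le_div_iff₀ hL1 (by positivity)]
    nlinarith
  have expand : (1 - μ1 / L1) * (f (x t) - f xs)
      = (f (x t) - f xs) - μ1 / L1 * (f (x t) - f xs) := by ring
  linarith
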